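/- arXiv:2510.24906 — 2 statements merged into one kernel-verified Lean document; each statement's English description precedes it below -/
import Mathlib

section
/- Let (N,v) be a convex integer coalitional game and let x, y ∈ {0,1}^N be two payoff vectors in the core of (N,v). If i ∈ N is a player with x_i = 1 and y_i = 0, then there exists a player j ∈ N with x_j = 0 and y_j = 1 such that the payoff vector obtained from x by changing x_i to 0 and x_j to 1 also belongs to the core of (N,v). -/
open Finset

/-- A game is convex if marginal contributions increase with coalition size. -/
def IsConvex {α : Type*} [DecidableEq α] (v : Finset α → ℝ) : Prop :=
  ∀ (i : α) (S T : Finset α), S ⊆ T → i ∉ T →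
    v (insert i S) - v S ≤ v (insert i T) - v T

/-- An integer game: every coalition value is an integer. -/
def IsIntegerGame {α : Type*} (v : Finset α → ℝ) : Prop :=
  ∀ S : Finset α, ∃ z : ℤ, v S = (z : ℝ)

/-- A size-bounded game: `v S < |S|` for every nonempty coalition. -/
def IsSizeBounded {α : Type*} (v : Finset α → ℝ) : Prop :=
  ∀ S : Finset α, S.Nonempty → v S < (S.card : ℝ)

/-- A payoff vector belongs to the core. -/
def InCore {α : Type*} [Fintype α] [DecidableEq α] (v : Finset α → ℝ) (x : α → ℝ) : Prop :=
  (∑ i, x i) = v Finset.univ ∧ ∀ S : Finset α, v S ≤ ∑ i ∈ S, x i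

/-- The set of players preceding `i` in the ordering `σ`. -/
def preSet {α : Type*} [Fintype α] [DecidableEq α]
    (σ : α ≃ Fin (Fintype.card α)) (i : α) : Finset α :=
  Finset.univ.filter (fun j => σ j < σ i)

/-- The Shapley value of player `i`: average marginal contribution over all orderings. -/
noncomputable def SV {α : Type*} [Fintype α] [DecidableEq α]
    (v : Finset α → ℝ) (i : α) : ℝ :=
  (∑ σ : α ≃ Fin (Fintype.card α), (v (insert i (preSet σ i)) - v (preSet σ i))) /
    (Nat.factorial (Fintype.card α) : ℝ)

/-- The Harsanyi dividend of a coalition. -/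
noncomputable def dividend {α : Type*} [DecidableEq α] (v : Finset α → ℝ) (S : Finset α) : ℝ :=
  ∑ T ∈ S.powerset, (-1 : ℝ) ^ (S.card - T.card) * v T

/-- A positive game: all Harsanyi dividends are nonnegative. -/
def IsPositive {α : Type*} [DecidableEq α] (v : Finset α → ℝ) : Prop :=
  ∀ S : Finset α, 0 ≤ dividend v S

/-- The `c`-reduced game on player set `N \ {i}`. -/
noncomputable def reducedGame {α : Type*} [Fintype α] [DecidableEq α]
    (v : Finset α → ℝ) (i : α) (c : ℝ) : Finset {j : α // j ≠ i} → ℝ :=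
  fun S =>
    if S = Finset.univ then v Finset.univ - c
    else if S = ∅ then 0
    else max (v (insert i (S.image Subtype.val)) - c) (v (S.image Subtype.val))

lemma supermod_aux {α : Type*} [DecidableEq α] {v : Finset α → ℝ} (hconv : IsConvex v) :
    ∀ (n : ℕ) (S T : Finset α), (S \ T).card = n → v S + v T ≤ v (S ∪ T) + v (S ∩ T) := by
  intro n
  induction n with
  | zero =>
    intro S T h
    have hST : S ⊆ T := by
      rw [← Finset.sdiff_eq_empty_iff_subset]
      exact Finset.card_eq_zero.mp h
    rw [Finset.union_eq_right.mpr hST, Finset.inter_eq_left.mpr hST]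
    linarith
  | succ n ih =>
    intro S T h
    obtain ⟨i, hi⟩ : (S \ T).Nonempty := by rw [← Finset.card_pos, h]; omega
    have hiS : i ∈ S := (Finset.mem_sdiff.mp hi).1
    have hiT : i ∉ T := (Finset.mem_sdiff.mp hi).2
    set S' := S.erase i with hS'
    have hS'card : (S' \ T).card = n := by
      have he : S' \ T = (S \ T).erase i := by
        ext j; simp only [hS', Finset.mem_sdiff, Finset.mem_erase]; tauto
      rw [he, Finset.card_erase_of_mem hi, h]; omega
    have ihS' := ih S' T hS'card
    have hnot : i ∉ S' ∪ T := by
      simp only [Finset.mem_union, hS', Finset.mem_erase]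
      push_neg
      exact ⟨fun hh => absurd rfl hh, hiT⟩
    have hconv1 := hconv i S' (S' ∪ T) Finset.subset_union_left hnot
    have h1 : insert i S' = S := Finset.insert_erase hiS
    have h2 : insert i (S' ∪ T) = S ∪ T := by rw [← Finset.insert_union, h1]
    have h3 : S' ∩ T = S ∩ T := by
      ext j
      simp only [hS', Finset.mem_inter, Finset.mem_erase]
      constructor
      · tauto
      · rintro ⟨hS, hT⟩; exact ⟨⟨fun hji => hiT (hji ▸ hT), hS⟩, hT⟩
    rw [h1, h2] at hconv1
    rw [h3] at ihS'
    linarith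

lemma supermod {α : Type*} [DecidableEq α] {v : Finset α → ℝ} (hconv : IsConvex v)
    (S T : Finset α) : v S + v T ≤ v (S ∪ T) + v (S ∩ T) :=
  supermod_aux hconv _ S T rfl

theorem stmt7 {N : Type*} [Fintype N] [DecidableEq N] [Nonempty N]
    (v : Finset N → ℝ) (hv0 : v ∅ = 0)
    (hconv : IsConvex v) (hint : IsIntegerGame v)
    (x y : N → ℝ) (hx01 : ∀ j, x j = 0 ∨ x j = 1) (hy01 : ∀ j, y j = 0 ∨ y j = 1)
    (hx : InCore v x) (hy : InCore v y)
    (i : N) (hxi : x i = 1) (hyi : y i = 0) :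
    ∃ j : N, x j = 0 ∧ y j = 1 ∧
      InCore v (Function.update (Function.update x i 0) j 1) := by
  classical
  -- x(S) is an integer for every S
  have hxint : ∀ S : Finset N, ∃ m : ℤ, (∑ k ∈ S, x k) = (m : ℝ) := by
    intro S
    refine ⟨∑ k ∈ S, if x k = 1 then 1 else 0, ?_⟩
    push_cast
    refine Finset.sum_congr rfl fun k _ => ?_
    rcases hx01 k with h | h <;> simp [h]
  -- tight sets
  set F : Finset (Finset N) :=
    Finset.univ.filter (fun S => i ∈ S ∧ v S = ∑ k ∈ S, x k) with hF
  have hunivF : Finset.univ ∈ F := by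
    simp only [hF, Finset.mem_filter, Finset.mem_univ, true_and]
    exact hx.1.symm
  obtain ⟨T0, hT0F, hT0min⟩ := F.exists_min_image Finset.card ⟨_, hunivF⟩
  have hT0i : i ∈ T0 := ((Finset.mem_filter.mp hT0F).2).1
  have hT0tight : v T0 = ∑ k ∈ T0, x k := ((Finset.mem_filter.mp hT0F).2).2
  -- every tight set containing i contains T0
  have hkey : ∀ S : Finset N, i ∈ S → v S = ∑ k ∈ S, x k → T0 ⊆ S := by
    intro S hiS hStight
    have hsum : (∑ k ∈ T0 ∪ S, x k) + ∑ k ∈ T0 ∩ S, x k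
        = (∑ k ∈ T0, x k) + ∑ k ∈ S, x k := Finset.sum_union_inter
    have h1 := hx.2 (T0 ∪ S)
    have h2 := hx.2 (T0 ∩ S)
    have h3 := supermod hconv T0 S
    have htight' : v (T0 ∩ S) = ∑ k ∈ T0 ∩ S, x k := by linarith
    have hmemF : T0 ∩ S ∈ F := by
      simp only [hF, Finset.mem_filter, Finset.mem_univ, true_and]
      exact ⟨Finset.mem_inter.mpr ⟨hT0i, hiS⟩, htight'⟩
    have hcard := hT0min _ hmemF
    have heq : T0 ∩ S = T0 :=
      Finset.eq_of_subset_of_card_le Finset.inter_subset_left hcard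
    exact (le_of_eq heq.symm).trans Finset.inter_subset_right
  -- find j
  have hjex : ∃ j ∈ T0, j ≠ i ∧ x j = 0 ∧ y j = 1 := by
    by_contra hcon
    push_neg at hcon
    have hle : ∀ j ∈ T0.erase i, y j ≤ x j := by
      intro j hj
      obtain ⟨hji, hjT0⟩ := Finset.mem_erase.mp hj
      rcases hx01 j with h0 | h1
      · rcases hy01 j with h0' | h1'
        · rw [h0, h0']
        · exact absurd h1' (hcon j hjT0 hji h0)
      · rcases hy01 j with h0' | h1' <;> rw [h1] <;> [rw [h0']; rw [h1']] <;> norm_num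
    have hsy : ∑ k ∈ T0, y k = y i + ∑ k ∈ T0.erase i, y k :=
      (Finset.add_sum_erase _ _ hT0i).symm
    have hsx : ∑ k ∈ T0, x k = x i + ∑ k ∈ T0.erase i, x k :=
      (Finset.add_sum_erase _ _ hT0i).symm
    have hss : ∑ k ∈ T0.erase i, y k ≤ ∑ k ∈ T0.erase i, x k :=
      Finset.sum_le_sum hle
    have := hy.2 T0
    rw [hT0tight] at this
    rw [hsy, hsx, hyi, hxi] at *
    linarith
  obtain ⟨j, hjT0, hji, hxj, hyj⟩ := hjex
  refine ⟨j, hxj, hyj, ?_⟩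
  -- the new vector
  set x' := Function.update (Function.update x i 0) j 1 with hx'
  have hx'val : ∀ k, x' k = x k + (if k = j then 1 else 0) - (if k = i then 1 else 0) := by
    intro k
    by_cases hkj : k = j
    · subst hkj
      simp [hx', Function.update, hji, hxj]
    · by_cases hki : k = i
      · subst hki
        simp [hx', Function.update, fun h => hkj h, hxi, Ne.symm hji]
      · simp [hx', Function.update, hki, hkj]
  have hsum' : ∀ S : Finset N, ∑ k ∈ S, x' k
      = (∑ k ∈ S, x k) + (if j ∈ S then 1 else 0) - (if i ∈ S then 1 else 0) := by
    intro S
    rw [Finset.sum_congr rfl fun k _ => hx'val k]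
    rw [Finset.sum_sub_distrib, Finset.sum_add_distrib]
    rw [Finset.sum_ite_eq' S j (fun _ => (1:ℝ)), Finset.sum_ite_eq' S i (fun _ => (1:ℝ))]
  constructor
  · rw [hsum' Finset.univ]
    simp [hx.1]
  · intro S
    rw [hsum' S]
    by_cases hiS : i ∈ S
    · by_cases hjS : j ∈ S
      · simp only [hiS, hjS, if_true]
        linarith [hx.2 S]
      · -- S not tight
        simp only [hiS, hjS, if_true, if_false]
        have hnt : v S ≠ ∑ k ∈ S, x k := by
          intro htight
          exact hjS (hkey S hiS htight (hjT0))
        obtain ⟨z, hz⟩ := hint S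
        obtain ⟨m, hm⟩ := hxint S
        have hle : v S ≤ ∑ k ∈ S, x k := hx.2 S
        rw [hz, hm] at hle hnt ⊢
        have : z < m := lt_of_le_of_ne (by exact_mod_cast hle) (fun h => hnt (by rw [h]))
        have : z + 1 ≤ m := this
        push_cast
        have : ((z:ℝ)) + 1 ≤ (m:ℝ) := by exact_mod_cast this
        linarith
    · simp only [hiS, if_false]
      by_cases hjS : j ∈ S <;> simp only [hjS, if_true, if_false] <;> linarith [hx.2 S]
end

section
/- Every positive coalitional game is convex: if (N,v) satisfies Δ_v(S) ≥ 0 for every S ⊆ N, then v(S ∪ {i}) − v(S) ≤ v(T ∪ {i}) − v(T) for every player i ∈ N and all coalitions S ⊆ T ⊆ N∖{i}. -/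
open Finset

lemma dividend_insert' {α : Type*} [DecidableEq α] (v : Finset α → ℝ) {i : α} {T : Finset α}
    (hi : i ∉ T) :
    dividend v (insert i T) = dividend (fun U => v (insert i U)) T - dividend v T := by
  unfold dividend
  have hdisj : Disjoint T.powerset (T.powerset.image (insert i)) := by
    rw [Finset.disjoint_left]
    rintro A hA hA'
    obtain ⟨U, hU, rfl⟩ := mem_image.1 hA'
    exact hi (mem_powerset.1 hA (mem_insert_self i U))
  rw [powerset_insert, sum_union hdisj, sum_image (fun x hx y hy h => by
    have hix : i ∉ x := fun hc => hi (mem_powerset.1 hx hc)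
    have hiy : i ∉ y := fun hc => hi (mem_powerset.1 hy hc)
    rw [← erase_insert hix, h, erase_insert hiy])]
  have hc : (insert i T).card = T.card + 1 := card_insert_of_notMem hi
  have h1 : ∀ U ∈ T.powerset,
      (-1 : ℝ) ^ ((insert i T).card - U.card) * v U
        = -((-1 : ℝ) ^ (T.card - U.card) * v U) := by
    intro U hU
    have := card_le_card (mem_powerset.1 hU)
    rw [hc, Nat.succ_sub this, pow_succ']
    ring
  have h2 : ∀ U ∈ T.powerset,
      (-1 : ℝ) ^ ((insert i T).card - (insert i U).card) * v (insert i U)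
        = (-1 : ℝ) ^ (T.card - U.card) * v (insert i U) := by
    intro U hU
    have hiU : i ∉ U := fun hc => hi (mem_powerset.1 hU hc)
    rw [hc, card_insert_of_notMem hiU, Nat.succ_sub_succ]
  rw [sum_congr rfl h1, sum_congr rfl h2, sum_neg_distrib]
  ring

lemma sum_dividend' {α : Type*} [DecidableEq α] (v : Finset α → ℝ) (S : Finset α) :
    ∑ T ∈ S.powerset, dividend v T = v S := by
  induction S using Finset.induction generalizing v with
  | empty => simp [dividend]
  | @insert i S hi ih =>
    have hdisj : Disjoint S.powerset (S.powerset.image (insert i)) := by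
      rw [Finset.disjoint_left]
      rintro A hA hA'
      obtain ⟨U, hU, rfl⟩ := mem_image.1 hA'
      exact hi (mem_powerset.1 hA (mem_insert_self i U))
    rw [powerset_insert, sum_union hdisj, sum_image (fun x hx y hy h => by
      have hix : i ∉ x := fun hc => hi (mem_powerset.1 hx hc)
      have hiy : i ∉ y := fun hc => hi (mem_powerset.1 hy hc)
      rw [← erase_insert hix, h, erase_insert hiy]), ih v]
    have : ∀ T ∈ S.powerset, dividend v (insert i T)
        = dividend (fun U => v (insert i U)) T - dividend v T := by
      intro T hT
      exact dividend_insert' v (fun hc => hi (mem_powerset.1 hT hc))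
    rw [sum_congr rfl this, sum_sub_distrib, ih (fun U => v (insert i U)), ih v]
    ring

lemma marginal_eq' {α : Type*} [DecidableEq α] (v : Finset α → ℝ) {i : α} {S : Finset α}
    (hi : i ∉ S) :
    v (insert i S) - v S = ∑ T ∈ S.powerset, dividend v (insert i T) := by
  have hdisj : Disjoint S.powerset (S.powerset.image (insert i)) := by
    rw [Finset.disjoint_left]
    rintro A hA hA'
    obtain ⟨U, hU, rfl⟩ := mem_image.1 hA'
    exact hi (mem_powerset.1 hA (mem_insert_self i U))
  rw [← sum_dividend' v (insert i S), ← sum_dividend' v S, powerset_insert, sum_union hdisj,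
    sum_image (fun x hx y hy h => by
      have hix : i ∉ x := fun hc => hi (mem_powerset.1 hx hc)
      have hiy : i ∉ y := fun hc => hi (mem_powerset.1 hy hc)
      rw [← erase_insert hix, h, erase_insert hiy])]
  ring

theorem stmt19 {N : Type*} [Fintype N] [DecidableEq N] [Nonempty N]
    (v : Finset N → ℝ) (hv0 : v ∅ = 0) (hpos : IsPositive v) :
    IsConvex v := by
  intro i S T hST hiT
  have hiS : i ∉ S := fun h => hiT (hST h)
  rw [marginal_eq' v hiS, marginal_eq' v hiT]
  exact sum_le_sum_of_subset_of_nonneg (powerset_mono.2 hST) (fun U _ _ => hpos _)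
end
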